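/- arXiv:2007.14183 — 5 statements merged into one kernel-verified Lean document; each statement's English description precedes it below -/
import Mathlib

section
/- With y, y', z, u as in the context, the two-element set {y, y'} equals the two-element set { z^{(n+1)/2}·( u/(2D) + A(u)·√R ), z^{(n+1)/2}·( u/(2D) − A(u)·√R ) }, where A(u) denotes the value of the polynomial A at u. -/
open Polynomial

/-- `F_m(Z) = 2 T_m(Z/2)` over ℂ, where `T_m` is the Chebyshev polynomial of the first kind. -/
noncomputable def Fc (m : ℤ) : ℂ[X] :=
  2 * (Polynomial.Chebyshev.T ℂ m).comp (C (1 / 2 : ℂ) * X)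

/-- The polynomial `A = (F_{n-1}(Z/√D) - dZ/D)/(2R)` (with `D = d² - R`), realized over ℂ
via a choice `sd` of a square root of `D`.  Since `n - 1` is even, it has rational
coefficients. -/
noncomputable def Apoly (n : ℕ) (d R : ℚ) (sd : ℂ) : ℂ[X] :=
  ((Fc ((n : ℤ) - 1)).comp (C sd⁻¹ * X) - C ((d : ℂ) / ((d : ℂ) ^ 2 - (R : ℂ))) * X)
    * C (1 / (2 * (R : ℂ)))

lemma cheb_eval_half_sum (t : ℂ) (ht : t ≠ 0) (m : ℤ) :
    (Polynomial.Chebyshev.T ℂ m).eval ((t + t⁻¹) / 2) = (t ^ m + t ^ (-m)) / 2 := by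
  set θ : ℂ := -Complex.I * Complex.log t with hθ
  have hIθ : θ * Complex.I = Complex.log t := by
    rw [hθ]; ring_nf; rw [Complex.I_sq]; ring
  have hcos : Complex.cos θ = (t + t⁻¹) / 2 := by
    rw [Complex.cos, hIθ, show -θ * Complex.I = -(θ * Complex.I) by ring, hIθ,
      Complex.exp_neg, Complex.exp_log ht]
  have hmain := Polynomial.Chebyshev.T_complex_cos θ m
  rw [hcos] at hmain
  rw [hmain, Complex.cos]
  have h1 : Complex.exp (↑m * θ * Complex.I) = t ^ m := by
    rw [show (↑m : ℂ) * θ * Complex.I = ↑m * (θ * Complex.I) by ring, hIθ,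
      Complex.exp_int_mul, Complex.exp_log ht]
  have h2 : Complex.exp (-(↑m * θ) * Complex.I) = t ^ (-m) := by
    rw [show -(↑m * θ) * Complex.I = ((-m : ℤ) : ℂ) * (θ * Complex.I) by push_cast; ring, hIθ,
      Complex.exp_int_mul, Complex.exp_log ht]
  rw [h1, h2]


/-- **Proposition 1.**  Let `n ≥ 3` be odd, `d, R ∈ ℚ`, `d ≠ 0`, `R` not a square,
`D = d² - R`.  Fix `√R` and `√D` in ℂ, let `y, y'` satisfy `yⁿ = d + √R`, `y'ⁿ = d - √R`,
and set `z = y·y'`, `u = z^{(n-1)/2}(y + y')`.  Then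
`{y, y'} = { z^{(n+1)/2}(u/(2D) + A(u)√R), z^{(n+1)/2}(u/(2D) - A(u)√R) }`. -/
theorem deMoivre_radical_reduction
    (n : ℕ) (hn3 : 3 ≤ n) (hodd : Odd n)
    (d R : ℚ) (hd : d ≠ 0) (hR : ¬ IsSquare R)
    (sqrtR : ℂ) (hsR : sqrtR ^ 2 = (R : ℂ))
    (sd : ℂ) (hsd : sd ^ 2 = (d : ℂ) ^ 2 - (R : ℂ))
    (y y' : ℂ) (hy : y ^ n = (d : ℂ) + sqrtR) (hy' : y' ^ n = (d : ℂ) - sqrtR)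
    (z u : ℂ) (hz : z = y * y') (hu : u = z ^ ((n - 1) / 2) * (y + y')) :
    ({y, y'} : Set ℂ) =
      { z ^ ((n + 1) / 2) *
          (u / (2 * ((d : ℂ) ^ 2 - (R : ℂ))) + (Apoly n d R sd).eval u * sqrtR),
        z ^ ((n + 1) / 2) *
          (u / (2 * ((d : ℂ) ^ 2 - (R : ℂ))) - (Apoly n d R sd).eval u * sqrtR) } := by
  obtain ⟨k, hk⟩ := hodd
  have hk1 : 1 ≤ k := by omega
  subst hk hz hu
  have h1 : (2 * k + 1 - 1) / 2 = k := by omega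
  have h2 : (2 * k + 1 + 1) / 2 = k + 1 := by omega
  rw [h1, h2]
  -- basic nonvanishing facts
  have hDQ : d ^ 2 - R ≠ 0 := by
    intro h
    exact hR ⟨d, by linear_combination -h⟩
  have hD : (d : ℂ) ^ 2 - (R : ℂ) ≠ 0 := by
    intro h
    apply hDQ
    have : ((d ^ 2 - R : ℚ) : ℂ) = 0 := by push_cast; linear_combination h
    exact_mod_cast this
  have hRQ : R ≠ 0 := fun h => hR ⟨0, by rw [h]; ring⟩
  have hRC : (R : ℂ) ≠ 0 := fun h => hRQ (by exact_mod_cast h)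
  have hsR0 : sqrtR ≠ 0 := fun h => hRC (by rw [← hsR, h]; ring)
  have hsd0 : sd ≠ 0 := fun h => hD (by rw [← hsd, h]; ring)
  have hzn : (y * y') ^ (2 * k + 1) = (d : ℂ) ^ 2 - (R : ℂ) := by
    rw [mul_pow, hy, hy']; linear_combination -hsR
  have hy0 : y ≠ 0 := by
    intro h; apply hD; rw [← hzn, h]; simp
  have hy'0 : y' ≠ 0 := by
    intro h; apply hD; rw [← hzn, h]; simp
  have hz0 : y * y' ≠ 0 := mul_ne_zero hy0 hy'0
  have hYk : y ^ k ≠ 0 := pow_ne_zero _ hy0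
  have hY'k : y' ^ k ≠ 0 := pow_ne_zero _ hy'0
  have hsd2 : sd ^ 2 = (y * y') ^ (2 * k + 1) := by rw [hsd, hzn]
  -- the argument of the Chebyshev polynomial
  set t : ℂ := y * (y * y') ^ k / sd with hts
  have ht0 : t ≠ 0 := by
    rw [hts]
    exact div_ne_zero (mul_ne_zero hy0 (pow_ne_zero _ hz0)) hsd0
  set u : ℂ := (y * y') ^ k * (y + y') with hus
  have htinv : t⁻¹ = y' * (y * y') ^ k / sd := by
    apply inv_eq_of_mul_eq_one_right
    rw [hts, div_mul_div_comm, div_eq_one_iff_eq (by exact mul_ne_zero hsd0 hsd0)]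
    rw [show sd * sd = sd ^ 2 by ring, hsd2]; ring
  have harg : sd⁻¹ * u / 2 = (t + t⁻¹) / 2 := by
    rw [hts, htinv, hus, ← add_div]
    field_simp
  have ht2 : t ^ 2 = y / y' := by
    rw [hts, div_pow, hsd2, div_eq_div_iff (by exact pow_ne_zero _ hz0) hy'0]
    ring
  have ht2k : t ^ (2 * k) = y ^ k / y' ^ k := by
    rw [pow_mul, ht2, div_pow]
  -- evaluate Fc
  have hFc : (Fc ((2 * k + 1 : ℕ) - 1 : ℤ)).eval (sd⁻¹ * u) =
      y ^ k / y' ^ k + y' ^ k / y ^ k := by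
    have hm : ((2 * k + 1 : ℕ) - 1 : ℤ) = (2 * k : ℕ) := by push_cast; ring
    rw [hm, Fc]
    simp only [eval_mul, eval_comp, eval_C, eval_X, eval_ofNat]
    rw [show (1 / 2 : ℂ) * (sd⁻¹ * u) = sd⁻¹ * u / 2 by ring, harg,
      cheb_eval_half_sum t ht0 (2 * k : ℕ), zpow_neg, zpow_natCast, ht2k, inv_div]
    ring
  -- evaluate Apoly
  have hA : (Apoly (2 * k + 1) d R sd).eval u =
      ((y ^ k / y' ^ k + y' ^ k / y ^ k
        - (d : ℂ) / ((d : ℂ) ^ 2 - (R : ℂ)) * u) * (1 / (2 * (R : ℂ)))) := by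
    rw [Apoly]
    simp only [eval_mul, eval_sub, eval_comp, eval_C, eval_X]
    rw [hFc]
  -- relations for the n-th powers
  have hYr : (y ^ k) ^ 2 * y = (d : ℂ) + sqrtR := by
    rw [← hy]; ring
  have hY'r : (y' ^ k) ^ 2 * y' = (d : ℂ) - sqrtR := by
    rw [← hy']; ring
  -- two key equalities
  have e1 : (y * y') ^ (k + 1) * (u / (2 * ((d:ℂ)^2 - (R:ℂ)))) = (y + y') / 2 := by
    rw [hus, ← hzn]
    have := pow_ne_zero (2 * k + 1) hz0
    field_simp
    ring
  have e2 : (y * y') ^ (k + 1) * ((Apoly (2 * k + 1) d R sd).eval u * sqrtR)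
      = (y' - y) / 2 := by
    rw [hA, hus, ← hsR] at *
    have hD' : (d : ℂ) ^ 2 - sqrtR ^ 2 ≠ 0 := hD
    field_simp
    ring_nf
    have hd2 : (d : ℂ) = ((y ^ k) ^ 2 * y + (y' ^ k) ^ 2 * y') / 2 := by
      linear_combination -(hYr + hY'r) / 2
    have hs2 : sqrtR = ((y ^ k) ^ 2 * y - (y' ^ k) ^ 2 * y') / 2 := by
      linear_combination -(hYr - hY'r) / 2
    rw [hd2, hs2]
    ring
  have hplus : (y * y') ^ (k + 1) *
      (u / (2 * ((d : ℂ) ^ 2 - (R : ℂ))) + (Apoly (2 * k + 1) d R sd).eval u * sqrtR) = y' := by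
    rw [mul_add, e1, e2]; ring
  have hminus : (y * y') ^ (k + 1) *
      (u / (2 * ((d : ℂ) ^ 2 - (R : ℂ))) - (Apoly (2 * k + 1) d R sd).eval u * sqrtR) = y := by
    rw [mul_sub, e1, e2]; ring
  rw [hplus, hminus]
  exact Set.pair_comm y y'
end

section
/- With the notation of the context, there is a sign ε ∈ {+1, −1} such that for every k = 0, 1, …, n−1 one has u_k = (u/2)·(ζ^k + ζ^{−k}) + ε·D·A(u)·√R·(ζ^k − ζ^{−k}); moreover A(u) ≠ 0. -/
open Polynomial

lemma cheb_eval (x : ℂ) (hx : x ≠ 0) (m : ℕ) :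
    2 * (Polynomial.Chebyshev.T ℂ (m : ℤ)).eval ((x + x⁻¹)/2) = x ^ m + x⁻¹ ^ m := by
  induction m using Nat.twoStepInduction with
  | zero => norm_num [Polynomial.Chebyshev.T_zero]
  | one => simp [Polynomial.Chebyshev.T_one]; field_simp
  | more m ih1 ih2 =>
      push_cast
      rw [show ((m : ℤ) + 2) = (m : ℤ) + 2 from rfl, Polynomial.Chebyshev.T_add_two]
      push_cast at ih1 ih2
      simp only [eval_sub, eval_mul, eval_ofNat, eval_X]
      linear_combination (x + x⁻¹) * ih2 - ih1 + (x ^ m + x⁻¹ ^ m) * (mul_inv_cancel₀ hx)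

/-- **Formula (3.4).**  With `u_k = z^{(n-1)/2}(y ζ^k + y' ζ^{-k})` and `u = u_0`, one has
`A(u) ≠ 0`, and there is a sign `ε ∈ {+1, -1}` such that for every `k = 0, …, n-1`,
`u_k = (u/2)(ζ^k + ζ^{-k}) + ε D A(u) √R (ζ^k - ζ^{-k})`. -/
theorem deMoivre_roots_formula
    (n : ℕ) (hn3 : 3 ≤ n) (hodd : Odd n)
    (d R : ℚ) (hd : d ≠ 0) (hR : ¬ IsSquare R)
    (sqrtR : ℂ) (hsR : sqrtR ^ 2 = (R : ℂ))
    (sd : ℂ) (hsd : sd ^ 2 = (d : ℂ) ^ 2 - (R : ℂ))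
    (y y' : ℂ) (hy : y ^ n = (d : ℂ) + sqrtR) (hy' : y' ^ n = (d : ℂ) - sqrtR)
    (z u : ℂ) (hz : z = y * y') (hu : u = z ^ ((n - 1) / 2) * (y + y'))
    (ζ : ℂ) (hζ : IsPrimitiveRoot ζ n) :
    (Apoly n d R sd).eval u ≠ 0 ∧
    ∃ ε : ℂ, (ε = 1 ∨ ε = -1) ∧
      ∀ k < n,
        z ^ ((n - 1) / 2) * (y * ζ ^ k + y' * (ζ ^ k)⁻¹) =
          u / 2 * (ζ ^ k + (ζ ^ k)⁻¹) +
            ε * ((d : ℂ) ^ 2 - (R : ℂ)) * (Apoly n d R sd).eval u * sqrtR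
              * (ζ ^ k - (ζ ^ k)⁻¹) := by
  obtain ⟨m, hm⟩ := hodd
  have hm2 : (n - 1) / 2 = m := by omega
  -- basic nonvanishing
  have hRQ : R ≠ 0 := fun h => hR ⟨0, by rw [h]; ring⟩
  have hRC : (R : ℂ) ≠ 0 := by exact_mod_cast hRQ
  have hsR0 : sqrtR ≠ 0 := by
    intro h; apply hRC; rw [← hsR, h]; ring
  have hDQ : d ^ 2 - R ≠ 0 := by
    intro h
    exact hR ⟨d, by linear_combination -h + d^2 - d*d⟩
  have hDC : (d : ℂ) ^ 2 - (R : ℂ) ≠ 0 := by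
    have : ((d ^ 2 - R : ℚ) : ℂ) ≠ 0 := by exact_mod_cast hDQ
    push_cast at this; exact this
  have hsd0 : sd ≠ 0 := by
    intro h; apply hDC; rw [← hsd, h]; ring
  set D : ℂ := (d : ℂ) ^ 2 - (R : ℂ) with hD
  set a : ℂ := z ^ m * y with ha
  set b : ℂ := z ^ m * y' with hb
  have hzn : z ^ n = D := by
    rw [hz, mul_pow, hy, hy']
    linear_combination -hsR
  have hab : a * b = D := by
    rw [← hzn, ha, hb, hz, hm]; ring
  have hDm0 : D ^ m ≠ 0 := pow_ne_zero _ hDC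
  have ha0 : a ≠ 0 := by
    intro h; apply hDC; rw [← hab, h]; ring
  have hb0 : b ≠ 0 := by
    intro h; apply hDC; rw [← hab, h]; ring
  have han : a ^ n = D ^ m * ((d : ℂ) + sqrtR) := by
    rw [ha, mul_pow, ← pow_mul, mul_comm m n, pow_mul, hzn, hy]
  have hbn : b ^ n = D ^ m * ((d : ℂ) - sqrtR) := by
    rw [hb, mul_pow, ← pow_mul, mul_comm m n, pow_mul, hzn, hy']
  have huab : u = a + b := by rw [hu, hm2, ha, hb]; ring
  -- x = a/sd
  clear_value D a b
  -- x = a/sd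
  have hx0 : a / sd ≠ 0 := div_ne_zero ha0 hsd0
  have hxinv : (a / sd)⁻¹ = b / sd := by
    apply inv_eq_of_mul_eq_one_right
    field_simp
    linear_combination hab - hsd
  have hsd2m : sd ^ (2 * m) = D ^ m := by rw [pow_mul, hsd]
  have ha2m : a ^ (2 * m) * a = D ^ m * ((d : ℂ) + sqrtR) := by
    rw [← pow_succ, show 2 * m + 1 = n by omega, han]
  have hb2m : b ^ (2 * m) * b = D ^ m * ((d : ℂ) - sqrtR) := by
    rw [← pow_succ, show 2 * m + 1 = n by omega, hbn]
  have hx2m : (a / sd) ^ (2 * m) = ((d : ℂ) + sqrtR) / a := by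
    rw [div_pow, hsd2m, div_eq_div_iff hDm0 ha0]
    linear_combination ha2m
  have hy2m : (b / sd) ^ (2 * m) = ((d : ℂ) - sqrtR) / b := by
    rw [div_pow, hsd2m, div_eq_div_iff hDm0 hb0]
    linear_combination hb2m
  -- evaluate Fc at sd⁻¹ * u
  have hsum : sd⁻¹ * u = a / sd + (a / sd)⁻¹ := by
    rw [hxinv, huab]; field_simp
  have hF : (Fc ((n : ℤ) - 1)).eval (sd⁻¹ * u)
      = ((d : ℂ) + sqrtR) / a + ((d : ℂ) - sqrtR) / b := by
    have hcast : ((n : ℤ) - 1) = ((2 * m : ℕ) : ℤ) := by push_cast; omega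
    have h2 := cheb_eval (a / sd) hx0 (2 * m)
    rw [hxinv] at h2
    rw [Fc, hcast]
    simp only [eval_mul, eval_comp, eval_ofNat, eval_C, eval_X]
    rw [show (1 / 2 : ℂ) * (sd⁻¹ * u) = (a / sd + b / sd) / 2 by
      rw [hsum, hxinv]; ring]
    rw [h2, hx2m, hy2m]
  -- evaluate Apoly at u
  have hAeval : (Apoly n d R sd).eval u
      = ((((d : ℂ) + sqrtR) / a + ((d : ℂ) - sqrtR) / b) - (d : ℂ) / D * u)
          * (1 / (2 * (R : ℂ))) := by
    rw [Apoly]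
    simp only [eval_mul, eval_sub, eval_comp, eval_C, eval_X]
    rw [hF, ← hD]
  have hA : (Apoly n d R sd).eval u = (b - a) / (2 * sqrtR * D) := by
    rw [hAeval, huab]
    field_simp
    linear_combination (-(sqrtR * (d:ℂ) * (a + b)) - (R:ℂ) * (b - a)) * hab
      + (D * (b - a)) * hsR
  have hkey : D * (Apoly n d R sd).eval u * sqrtR = (b - a) / 2 := by
    rw [hA]
    field_simp
  have hne : a ≠ b := by
    intro h
    have h1 : a ^ (2 * m) * a = D ^ m * a := by
      rw [pow_mul, show a ^ 2 = D by rw [← hab, ← h]; ring]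
    have h2 : a = (d : ℂ) + sqrtR :=
      mul_left_cancel₀ hDm0 (h1.symm.trans ha2m)
    have h3 : a = (d : ℂ) - sqrtR := by
      have h1' : b ^ (2 * m) * b = D ^ m * a := by
        rw [← h, pow_mul, show a ^ 2 = D by rw [← hab, ← h]; ring]
      exact mul_left_cancel₀ hDm0 (h1'.symm.trans hb2m)
    apply hsR0
    linear_combination (h3 - h2) / 2
  refine ⟨?_, -1, Or.inr rfl, ?_⟩
  · rw [hA]
    exact div_ne_zero (sub_ne_zero.mpr (Ne.symm hne))
      (by simp [hsR0, hDC])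
  · intro k hk
    rw [hm2]
    linear_combination (-(ζ ^ k)) * ha - (ζ ^ k)⁻¹ * hb
      - ((ζ ^ k + (ζ ^ k)⁻¹) / 2) * huab + ((ζ ^ k) - (ζ ^ k)⁻¹) * hkey
end

section
/- With the notation of the context, for every odd k ∈ {1, …, n−1} one has u_k = (u/2)·F_k( (u_1 + u_{n−1})/u ) + D·A(u)·P_k( (u_1 − u_{n−1})/(2·D·A(u)) ), and u_{n−k} = (u/2)·F_k( (u_1 + u_{n−1})/u ) − D·A(u)·P_k( (u_1 − u_{n−1})/(2·D·A(u)) ). -/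
open Polynomial

/-- For odd `k`, the polynomial `P_k = i√R·(-1)^{(k-1)/2}·F_k(Z/(i√R))`, which has rational
coefficients; realized over ℂ via the chosen square root `sqrtR` of `R`. -/
noncomputable def Ppoly (sqrtR : ℂ) (k : ℕ) : ℂ[X] :=
  C (Complex.I * sqrtR * (-1 : ℂ) ^ ((k - 1) / 2)) *
    (Fc (k : ℤ)).comp (C (Complex.I * sqrtR)⁻¹ * X)


lemma T_eval_key (x y : ℂ) (hxy : x * y = 1) (k : ℕ) :
    (Polynomial.Chebyshev.T ℂ (k : ℤ)).eval ((x + y) / 2) = (x ^ k + y ^ k) / 2 := by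
  induction k using Nat.twoStepInduction with
  | zero => simp
  | one => simp [Polynomial.Chebyshev.T_one]
  | more n ih1 ih2 =>
    have c : ((n + 2 : ℕ) : ℤ) = (n : ℤ) + 2 := by push_cast; ring
    have c1 : ((n + 1 : ℕ) : ℤ) = (n : ℤ) + 1 := by push_cast; ring
    rw [c1] at ih2
    rw [c, Polynomial.Chebyshev.T_add_two]
    simp only [eval_sub, eval_mul, eval_ofNat, eval_X, ih1, ih2]
    linear_combination ((x ^ n + y ^ n) / 2) * hxy

lemma Fc_eval_key (x y : ℂ) (hxy : x * y = 1) (k : ℕ) :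
    (Fc (k : ℤ)).eval (x + y) = x ^ k + y ^ k := by
  have h := T_eval_key x y hxy k
  simp only [Fc, eval_mul, eval_comp, eval_ofNat, eval_C, eval_X]
  rw [show (1 / 2 : ℂ) * (x + y) = (x + y) / 2 by ring, h]
  ring

lemma Fc_eval_inv (x : ℂ) (hx : x ≠ 0) (k : ℕ) :
    (Fc (k : ℤ)).eval (x + x⁻¹) = x ^ k + (x ^ k)⁻¹ := by
  rw [Fc_eval_key x x⁻¹ (mul_inv_cancel₀ hx) k, inv_pow]

lemma Ppoly_eval_key (s x : ℂ) (hs : s ≠ 0) (hx : x ≠ 0) (m : ℕ) :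
    (Ppoly s (2 * m + 1)).eval (s * (x - x⁻¹)) = s * (x ^ (2 * m + 1) - (x ^ (2 * m + 1))⁻¹) := by
  have hI := Complex.I_ne_zero
  have hw : (-Complex.I * x) * (Complex.I * x⁻¹) = 1 := by
    field_simp
    linear_combination -Complex.I_sq
  have harg : (Complex.I * s)⁻¹ * (s * (x - x⁻¹)) = (-Complex.I * x) + (Complex.I * x⁻¹) := by
    field_simp
    linear_combination (x ^ 2 - 1) * Complex.I_sq
  have hF := Fc_eval_key (-Complex.I * x) (Complex.I * x⁻¹) hw (2 * m + 1)
  have hm : (2 * m + 1 - 1) / 2 = m := by omega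
  simp only [Ppoly, eval_mul, eval_comp, eval_C, eval_X, harg, hF, hm]
  have hIk : Complex.I ^ (2 * m + 1) = (-1 : ℂ) ^ m * Complex.I := by
    rw [pow_succ, pow_mul, Complex.I_sq]
  have hnIk : (-Complex.I) ^ (2 * m + 1) = -((-1 : ℂ) ^ m * Complex.I) := by
    rw [show -Complex.I = (-1 : ℂ) * Complex.I by ring, mul_pow, hIk,
      show ((-1 : ℂ)) ^ (2 * m + 1) = -1 from Odd.neg_one_pow ⟨m, by ring⟩]
    ring
  rw [mul_pow, mul_pow, hnIk, hIk, inv_pow]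
  have hsq : ((-1 : ℂ) ^ m) ^ 2 = 1 := by
    rw [← pow_mul, mul_comm, pow_mul]
    norm_num
  linear_combination s * ((-1 : ℂ) ^ m) ^ 2 * ((x ^ (2 * m + 1))⁻¹ - x ^ (2 * m + 1)) * Complex.I_sq
    + s * (x ^ (2 * m + 1) - (x ^ (2 * m + 1))⁻¹) * hsq

/-- **Theorem 3.**  All roots `u_k` of `f_n = f_n(Z,d,R)` are expressed in terms of the three
roots `u = u_0`, `u_1`, `u_{n-1}`: for every odd `k ∈ {1, …, n-1}`,
`u_k = (u/2)·F_k((u_1+u_{n-1})/u) + D·A(u)·P_k((u_1-u_{n-1})/(2DA(u)))`, and `u_{n-k}` is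
obtained by replacing the middle plus sign by a minus sign. -/
theorem deMoivre_roots_in_terms_of_three
    (n : ℕ) (hn3 : 3 ≤ n) (hodd : Odd n)
    (d R : ℚ) (hd : d ≠ 0) (hR : ¬ IsSquare R)
    (sqrtR : ℂ) (hsR : sqrtR ^ 2 = (R : ℂ))
    (sd : ℂ) (hsd : sd ^ 2 = (d : ℂ) ^ 2 - (R : ℂ))
    (y y' : ℂ) (hy : y ^ n = (d : ℂ) + sqrtR) (hy' : y' ^ n = (d : ℂ) - sqrtR)
    (z u : ℂ) (hz : z = y * y') (hu : u = z ^ ((n - 1) / 2) * (y + y'))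
    (ζ : ℂ) (hζ : IsPrimitiveRoot ζ n)
    (u_ : ℕ → ℂ)
    (hu_val : ∀ k, u_ k = z ^ ((n - 1) / 2) * (y * ζ ^ k + y' * (ζ ^ k)⁻¹))
    (hu_formula : ∀ k, u_ k =
      u / 2 * (ζ ^ k + (ζ ^ k)⁻¹) +
        ((d : ℂ) ^ 2 - (R : ℂ)) * (Apoly n d R sd).eval u * sqrtR * (ζ ^ k - (ζ ^ k)⁻¹))
    (hune : u ≠ 0) (hAu : (Apoly n d R sd).eval u ≠ 0) :
    ∀ k, 1 ≤ k → k ≤ n - 1 → Odd k →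
      u_ k =
        u / 2 * (Fc (k : ℤ)).eval ((u_ 1 + u_ (n - 1)) / u) +
          ((d : ℂ) ^ 2 - (R : ℂ)) * (Apoly n d R sd).eval u *
            (Ppoly sqrtR k).eval
              ((u_ 1 - u_ (n - 1)) /
                (2 * ((d : ℂ) ^ 2 - (R : ℂ)) * (Apoly n d R sd).eval u)) ∧
      u_ (n - k) =
        u / 2 * (Fc (k : ℤ)).eval ((u_ 1 + u_ (n - 1)) / u) -
          ((d : ℂ) ^ 2 - (R : ℂ)) * (Apoly n d R sd).eval u *
            (Ppoly sqrtR k).eval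
              ((u_ 1 - u_ (n - 1)) /
                (2 * ((d : ℂ) ^ 2 - (R : ℂ)) * (Apoly n d R sd).eval u)) := by
  intro k hk1 hk2 hkodd
  have hn0 : n ≠ 0 := by omega
  have hzeta0 : ζ ≠ 0 := hζ.ne_zero hn0
  have hzetan : ζ ^ n = 1 := hζ.pow_eq_one
  have hR0 : (R : ℂ) ≠ 0 := by
    intro h
    have h0 : R = 0 := by exact_mod_cast h
    exact hR ⟨0, by rw [h0]; norm_num⟩
  have hs0 : sqrtR ≠ 0 := by
    intro h
    apply hR0; rw [← hsR, h]; ring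
  have hD0 : (d : ℂ) ^ 2 - (R : ℂ) ≠ 0 := by
    intro h
    apply hR
    have h2 : ((d ^ 2 : ℚ) : ℂ) = ((R : ℚ) : ℂ) := by push_cast; linear_combination h
    have h3 : d ^ 2 = R := by exact_mod_cast h2
    exact ⟨d, by rw [← h3]; ring⟩
  set D : ℂ := (d : ℂ) ^ 2 - (R : ℂ) with hD
  set Au : ℂ := (Apoly n d R sd).eval u with hAudef
  have hpowinv : ∀ j, j ≤ n → ζ ^ (n - j) = (ζ ^ j)⁻¹ := by
    intro j hj
    have : ζ ^ (n - j) * ζ ^ j = 1 := by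
      rw [← pow_add, Nat.sub_add_cancel hj, hzetan]
    exact eq_inv_of_mul_eq_one_left this
  have h1 : u_ 1 = u / 2 * (ζ + ζ⁻¹) + D * Au * sqrtR * (ζ - ζ⁻¹) := by
    simpa using hu_formula 1
  have hnm1 : u_ (n - 1) = u / 2 * (ζ⁻¹ + ζ) + D * Au * sqrtR * (ζ⁻¹ - ζ) := by
    have := hu_formula (n - 1)
    rwa [hpowinv 1 (by omega), pow_one, inv_inv] at this
  have hq1 : (u_ 1 + u_ (n - 1)) / u = ζ + ζ⁻¹ := by
    rw [h1, hnm1]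
    field_simp
    ring
  have hq2 : (u_ 1 - u_ (n - 1)) / (2 * D * Au) = sqrtR * (ζ - ζ⁻¹) := by
    rw [h1, hnm1]
    field_simp
    ring
  obtain ⟨m, hkm⟩ := hkodd
  have hk2m : k = 2 * m + 1 := by omega
  have hFeval : (Fc (k : ℤ)).eval ((u_ 1 + u_ (n - 1)) / u) = ζ ^ k + (ζ ^ k)⁻¹ := by
    rw [hq1]; exact Fc_eval_inv ζ hzeta0 k
  have hPeval : (Ppoly sqrtR k).eval ((u_ 1 - u_ (n - 1)) / (2 * D * Au)) =
      sqrtR * (ζ ^ k - (ζ ^ k)⁻¹) := by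
    rw [hq2, hk2m]
    exact Ppoly_eval_key sqrtR ζ hs0 hzeta0 m
  constructor
  · rw [hu_formula k, hFeval, hPeval]
    ring
  · have hnk := hu_formula (n - k)
    rw [hpowinv k (by omega), inv_inv] at hnk
    rw [hnk, hFeval, hPeval]
    ring
end

section
/- Suppose R < 0 and √R ∈ ℚ(ζ). Then K = ℚ(√R·(ζ − ζ^{−1})) equals the maximal real subfield ℚ(ζ + ζ^{−1}) of ℚ(ζ), K is a Galois extension of ℚ, and Gal(K/ℚ) is isomorphic to the quotient group (ℤ/nℤ)ˣ/{±1}. -/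
open Polynomial

private lemma galK_aux_sub {u v : ℂ} (hu : u ≠ 0) (hv : v ≠ 0) :
    u - u⁻¹ = v - v⁻¹ ↔ u = v ∨ u = -v⁻¹ := by
  have key : (u - v) * (u + v⁻¹) = (u - u⁻¹ - (v - v⁻¹)) * u := by
    field_simp
    ring
  constructor
  · intro h
    have h0 : (u - v) * (u + v⁻¹) = 0 := by rw [key, h, sub_self, zero_mul]
    rcases mul_eq_zero.mp h0 with h1 | h1
    · exact Or.inl (sub_eq_zero.mp h1)
    · exact Or.inr (eq_neg_of_add_eq_zero_left h1)
  · rintro (rfl | rfl)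
    · rfl
    · rw [inv_neg, inv_inv]
      ring
private lemma galK_aux_add {u v : ℂ} (hu : u ≠ 0) (hv : v ≠ 0) :
    u + u⁻¹ = v + v⁻¹ ↔ u = v ∨ u = v⁻¹ := by
  have key : (u - v) * (u - v⁻¹) = (u + u⁻¹ - (v + v⁻¹)) * u := by
    field_simp
    ring
  constructor
  · intro h
    have h0 : (u - v) * (u - v⁻¹) = 0 := by rw [key, h, sub_self, zero_mul]
    rcases mul_eq_zero.mp h0 with h1 | h1
    · exact Or.inl (sub_eq_zero.mp h1)
    · exact Or.inr (sub_eq_zero.mp h1)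
  · rintro (rfl | rfl)
    · rfl
    · rw [inv_inv]
      ring
private lemma galK_aux_neg {n : ℕ} (hodd : Odd n) {x y : ℂ} (hx : x ^ n = 1) (hy : y ^ n = 1) :
    x ≠ -y := by
  rintro rfl
  rw [hodd.neg_pow, hy] at hx
  exact (by norm_num : (-1 : ℂ) ≠ 1) hx

set_option maxHeartbeats 1000000 in
set_option synthInstance.maxHeartbeats 100000 in
/-- **Proposition 4, exceptional case.**  Let `n ≥ 3` be odd and `R ∈ ℚ` a nonzero rational
that is not a square.  If `R < 0` and `√R ∈ ℚ(ζ)`, then `K = ℚ(√R(ζ - ζ⁻¹))` equals the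
maximal real subfield `ℚ(ζ + ζ⁻¹)` of `ℚ(ζ)`, is Galois over ℚ, and its Galois group is
isomorphic to `(ℤ/nℤ)ˣ/{±1}`. -/
theorem galK_exceptional
    (n : ℕ) (hn3 : 3 ≤ n) (hodd : Odd n)
    (R : ℚ) (hR0 : R ≠ 0) (hR : ¬ IsSquare R)
    (sqrtR : ℂ) (hsR : sqrtR ^ 2 = (R : ℂ))
    (ζ : ℂ) (hζ : IsPrimitiveRoot ζ n)
    (hRneg : R < 0) (hmem : sqrtR ∈ IntermediateField.adjoin ℚ ({ζ} : Set ℂ))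
    (K : IntermediateField ℚ ℂ)
    (hK : K = IntermediateField.adjoin ℚ ({sqrtR * (ζ - ζ⁻¹)} : Set ℂ)) :
    K = IntermediateField.adjoin ℚ ({ζ + ζ⁻¹} : Set ℂ) ∧
    IsGalois ℚ K ∧
    Nonempty ((K ≃ₐ[ℚ] K) ≃* ((ZMod n)ˣ ⧸ Subgroup.zpowers (-1 : (ZMod n)ˣ))) := by
  have hn0 : n ≠ 0 := by omega
  haveI : NeZero n := ⟨hn0⟩
  have hnpos : 0 < n := by omega
  -- basic complex facts
  have hζn : ζ ^ n = 1 := hζ.pow_eq_one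
  have hζ0 : ζ ≠ 0 := by
    intro h; rw [h, zero_pow hn0] at hζn; exact zero_ne_one hζn
  have hζinvn : (ζ⁻¹) ^ n = 1 := by rw [inv_pow, hζn, inv_one]
  have hζinv0 : ζ⁻¹ ≠ 0 := inv_ne_zero hζ0
  have hnorm : ‖ζ‖ = 1 := Complex.norm_eq_one_of_pow_eq_one hζn hn0
  have hconjζ : (starRingEnd ℂ) ζ = ζ⁻¹ := (Complex.inv_eq_conj hnorm).symm
  have hs0 : sqrtR ≠ 0 := by
    intro h
    rw [h] at hsR
    have : (R : ℂ) = 0 := by rw [← hsR]; ring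
    exact hR0 (by exact_mod_cast this)
  have hconjs : (starRingEnd ℂ) sqrtR = -sqrtR := by
    have hsq : ((starRingEnd ℂ) sqrtR) ^ 2 = sqrtR ^ 2 := by
      rw [← map_pow, hsR, map_ratCast]
    rcases mul_eq_zero.mp
        (show ((starRingEnd ℂ) sqrtR - sqrtR) * ((starRingEnd ℂ) sqrtR + sqrtR) = 0 by
          linear_combination hsq) with h | h
    · exfalso
      have him : sqrtR.im = 0 := Complex.conj_eq_iff_im.mp (sub_eq_zero.mp h)
      have h1 := congrArg Complex.re hsR
      rw [pow_two, Complex.mul_re, him] at h1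
      simp only [mul_zero, sub_zero, Complex.ratCast_re] at h1
      have hRneg' : (R : ℝ) < 0 := by exact_mod_cast hRneg
      nlinarith [h1, hRneg']
    · exact eq_neg_of_add_eq_zero_left h
  -- the cyclotomic field L
  set L : IntermediateField ℚ ℂ := IntermediateField.adjoin ℚ ({ζ} : Set ℂ) with hLdef
  have hζmem : ζ ∈ L := IntermediateField.mem_adjoin_simple_self ℚ ζ
  have hζint : IsIntegral ℚ ζ := by
    refine ⟨X ^ n - C 1, monic_X_pow_sub_C 1 hn0, ?_⟩
    simp [hζn]
  set m : ℕ+ := ⟨n, hnpos⟩ with hm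
  have hζm : IsPrimitiveRoot ζ (m : ℕ) := hζ
  haveI hadj : IsCyclotomicExtension {(m : ℕ)} ℚ (Algebra.adjoin ℚ ({ζ} : Set ℂ)) :=
    hζm.adjoin_isCyclotomicExtension ℚ
  haveI hcyc : IsCyclotomicExtension {(m : ℕ)} ℚ L := by
    have h1 : L.toSubalgebra = Algebra.adjoin ℚ ({ζ} : Set ℂ) :=
      IntermediateField.adjoin_simple_toSubalgebra_of_isAlgebraic hζint.isAlgebraic
    exact IsCyclotomicExtension.equiv (S := {(m : ℕ)}) (A := ℚ)
      (B := ↥(Algebra.adjoin ℚ ({ζ} : Set ℂ))) (Subalgebra.equivOfEq _ _ h1.symm)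
  haveI : IsGalois ℚ L := IsCyclotomicExtension.isGalois {(m : ℕ)} ℚ L
  haveI : FiniteDimensional ℚ L := IsCyclotomicExtension.finiteDimensional {(m : ℕ)} ℚ L
  -- elements of L
  have hζinvmem : ζ⁻¹ ∈ L := inv_mem hζmem
  have hαmem : sqrtR * (ζ - ζ⁻¹) ∈ L := mul_mem hmem (sub_mem hζmem hζinvmem)
  have hβmem : ζ + ζ⁻¹ ∈ L := add_mem hζmem hζinvmem
  set ζL : L := ⟨ζ, hζmem⟩ with hζLdef
  set sL : L := ⟨sqrtR, hmem⟩ with hsLdef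
  set αL : L := ⟨sqrtR * (ζ - ζ⁻¹), hαmem⟩ with hαLdef
  set βL : L := ⟨ζ + ζ⁻¹, hβmem⟩ with hβLdef
  have hζL : IsPrimitiveRoot ζL (m : ℕ) := IsPrimitiveRoot.coe_submonoidClass_iff.mp hζm
  have hζL0 : ζL ≠ 0 := fun h => hζ0 (by exact congrArg Subtype.val h)
  have hsL0 : sL ≠ 0 := fun h => hs0 (by exact congrArg Subtype.val h)
  have hζLn : ζL ^ n = 1 := by
    apply Subtype.ext
    push_cast [IntermediateField.coe_inv]
    exact hζn
  -- ψ
  have hinj : Function.Injective (hζL.autToPow ℚ) := hζL.autToPow_injective ℚ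
  have hcard1 : Fintype.card (L ≃ₐ[ℚ] L) = Fintype.card (ZMod n)ˣ := by
    rw [← Nat.card_eq_fintype_card, IsGalois.card_aut_eq_finrank,
      IsCyclotomicExtension.finrank (n := (m : ℕ)) L (cyclotomic.irreducible_rat hnpos),
      ZMod.card_units_eq_totient]
    rfl
  have hbij : Function.Bijective (hζL.autToPow ℚ) :=
    (Fintype.bijective_iff_injective_and_card _).mpr ⟨hinj, hcard1⟩
  set ψ : (L ≃ₐ[ℚ] L) ≃* (ZMod n)ˣ := MulEquiv.ofBijective (hζL.autToPow ℚ) hbij with hψdef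
  have hspec : ∀ σ : L ≃ₐ[ℚ] L, ζL ^ ((ψ σ : ZMod n)).val = σ ζL := fun σ =>
    hζL.autToPow_spec ℚ σ
  have hvalinj : ∀ x y : ZMod n, x.val = y.val → x = y := fun x y h =>
    ZMod.val_injective n h
  -- generator determines automorphism
  have hdet : ∀ σ τ : (L ≃ₐ[ℚ] L), σ ζL = τ ζL → σ = τ := by
    intro σ τ h
    apply hinj
    have h3 : ζL ^ ((ψ σ : ZMod n)).val = ζL ^ ((ψ τ : ZMod n)).val := by
      rw [hspec, hspec, h]
    have hval := hζL.pow_inj (ZMod.val_lt _) (ZMod.val_lt _) h3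
    exact Units.ext (hvalinj _ _ hval)
  -- complex conjugation restricted to L
  set conjQ : ℂ ≃ₐ[ℚ] ℂ := Complex.conjAe.restrictScalars ℚ with hconjQdef
  set τc : L ≃ₐ[ℚ] L := conjQ.restrictNormal L with hτcdef
  have hτcspec : ∀ x : L, ((τc x : ℂ)) = (starRingEnd ℂ) (x : ℂ) := by
    intro x
    have h := AlgEquiv.restrictNormal_commutes conjQ L x
    have h2 : conjQ ((x : ℂ)) = (starRingEnd ℂ) (x : ℂ) := rfl
    rw [← h2]
    exact h
  have hτcζ : τc ζL = ζL⁻¹ := by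
    apply Subtype.ext
    rw [hτcspec]
    push_cast [IntermediateField.coe_inv]
    exact hconjζ
  have hτcα : τc αL = αL := by
    apply Subtype.ext
    rw [hτcspec]
    push_cast [IntermediateField.coe_inv]
    rw [map_mul, map_sub, hconjs, hconjζ, map_inv₀, hconjζ, inv_inv]
    ring
  have hτcβ : τc βL = βL := by
    apply Subtype.ext
    rw [hτcspec]
    push_cast [IntermediateField.coe_inv]
    rw [map_add, hconjζ, map_inv₀, hconjζ, inv_inv]
    ring
  -- fixing subgroup of adjoin singleton
  have hfix : ∀ (x : L) (σ : L ≃ₐ[ℚ] L),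
      σ ∈ (IntermediateField.adjoin ℚ ({x} : Set L)).fixingSubgroup ↔ σ x = x := by
    intro x σ
    constructor
    · intro h
      exact (IntermediateField.mem_fixingSubgroup_iff _ σ).mp h x
        (IntermediateField.mem_adjoin_simple_self ℚ x)
    · intro h
      rw [IntermediateField.mem_fixingSubgroup_iff]
      intro y hy
      have hsub : (IntermediateField.adjoin ℚ ({x} : Set L)).toSubalgebra
          = Algebra.adjoin ℚ ({x} : Set L) :=
        IntermediateField.adjoin_simple_toSubalgebra_of_isAlgebraic (IsAlgebraic.of_finite ℚ x)
      have hy' : y ∈ Algebra.adjoin ℚ ({x} : Set L) := by rw [← hsub]; exact hy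
      have hle : Algebra.adjoin ℚ ({x} : Set L) ≤
          AlgHom.equalizer σ.toAlgHom (AlgHom.id ℚ L) := by
        apply Algebra.adjoin_le
        intro z hz
        rw [Set.mem_singleton_iff] at hz
        subst hz
        exact h
      exact hle hy'
  -- sign of σ on sL
  have hsL2 : sL ^ 2 = algebraMap ℚ L R := by
    apply Subtype.ext
    have hRL : ((algebraMap ℚ (↥L) R : L) : ℂ) = (R : ℂ) := by
      have ht := IsScalarTower.algebraMap_apply ℚ (↥L) ℂ R
      rw [IntermediateField.algebraMap_apply] at ht
      rw [← ht]
      exact eq_ratCast (algebraMap ℚ ℂ) R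
    rw [show ((sL ^ 2 : L) : ℂ) = sqrtR ^ 2 by push_cast [IntermediateField.coe_inv]; ring, hRL, hsR]
  have hsign : ∀ σ : L ≃ₐ[ℚ] L, σ sL = sL ∨ σ sL = -sL := by
    intro σ
    have h2 : (σ sL) ^ 2 = sL ^ 2 := by
      rw [← map_pow, hsL2, AlgEquiv.commutes]
    rcases mul_eq_zero.mp (show (σ sL - sL) * (σ sL + sL) = 0 by linear_combination h2)
      with h | h
    · exact Or.inl (sub_eq_zero.mp h)
    · exact Or.inr (eq_neg_of_add_eq_zero_left h)
  -- powers of ζ facts for σ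
  have hσζn : ∀ σ : L ≃ₐ[ℚ] L, ((σ ζL : ℂ)) ^ n = 1 := by
    intro σ
    have h : (σ ζL) ^ n = 1 := by rw [← map_pow, hζLn, map_one]
    have h' := congrArg Subtype.val h
    push_cast [IntermediateField.coe_inv] at h'
    exact h'
  have hσζ0 : ∀ σ : L ≃ₐ[ℚ] L, ((σ ζL : ℂ)) ≠ 0 := by
    intro σ h
    have h' : ((σ ζL : ℂ)) ^ n = 0 := by rw [h, zero_pow hn0]
    rw [hσζn σ] at h'
    exact zero_ne_one h'.symm
  -- basic factorizations
  have hαfac : αL = sL * (ζL - ζL⁻¹) := by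
    apply Subtype.ext
    push_cast [IntermediateField.coe_inv]
    ring
  have hβfac : βL = ζL + ζL⁻¹ := by
    apply Subtype.ext
    push_cast [IntermediateField.coe_inv]
    ring
  have claimA : ∀ σ : L ≃ₐ[ℚ] L, σ αL = αL ↔ (σ = 1 ∨ σ = τc) := by
    intro σ
    constructor
    · intro h
      rw [hαfac, map_mul, map_sub, map_inv₀] at h
      rcases hsign σ with hs | hs
      · left
        apply hdet σ 1
        rw [hs] at h
        have h' : σ ζL - (σ ζL)⁻¹ = ζL - ζL⁻¹ := mul_left_cancel₀ hsL0 (h.trans hαfac.symm ▸ h)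
        have hc : ((σ ζL : ℂ)) - ((σ ζL : ℂ))⁻¹ = ζ - ζ⁻¹ := by
          have hcc := congrArg Subtype.val h'
          push_cast [IntermediateField.coe_inv] at hcc
          exact hcc
        rcases (galK_aux_sub (hσζ0 σ) hζ0).mp hc with he | he
        · rw [AlgEquiv.one_apply]
          exact Subtype.ext he
        · exact absurd he (galK_aux_neg hodd (hσζn σ) hζinvn)
      · right
        apply hdet σ τc
        rw [hs] at h
        have h'' : sL * (-(σ ζL - (σ ζL)⁻¹)) = sL * (ζL - ζL⁻¹) := by
          rw [mul_neg, ← neg_mul]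
          exact h
        have h' : σ ζL - (σ ζL)⁻¹ = -(ζL - ζL⁻¹) :=
          neg_eq_iff_eq_neg.mp (mul_left_cancel₀ hsL0 h'')
        have hc : ((σ ζL : ℂ)) - ((σ ζL : ℂ))⁻¹ = ζ⁻¹ - (ζ⁻¹)⁻¹ := by
          have hcc := congrArg Subtype.val h'
          push_cast [IntermediateField.coe_inv] at hcc
          rw [hcc, inv_inv]
          ring
        rcases (galK_aux_sub (hσζ0 σ) hζinv0).mp hc with he | he
        · rw [hτcζ]
          apply Subtype.ext
          push_cast [IntermediateField.coe_inv]
          exact he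
        · rw [inv_inv] at he
          exact absurd he (galK_aux_neg hodd (hσζn σ) hζn)
    · rintro (rfl | rfl)
      · rw [AlgEquiv.one_apply]
      · exact hτcα
  have claimB : ∀ σ : L ≃ₐ[ℚ] L, σ βL = βL ↔ (σ = 1 ∨ σ = τc) := by
    intro σ
    constructor
    · intro h
      rw [hβfac, map_add, map_inv₀] at h
      have hc : ((σ ζL : ℂ)) + ((σ ζL : ℂ))⁻¹ = ζ + ζ⁻¹ := by
        have hcc := congrArg Subtype.val h
        push_cast [IntermediateField.coe_inv] at hcc
        exact hcc
      rcases (galK_aux_add (hσζ0 σ) hζ0).mp hc with he | he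
      · left
        apply hdet σ 1
        rw [AlgEquiv.one_apply]
        exact Subtype.ext he
      · right
        apply hdet σ τc
        rw [hτcζ]
        apply Subtype.ext
        push_cast [IntermediateField.coe_inv]
        exact he
    · rintro (rfl | rfl)
      · rw [AlgEquiv.one_apply]
      · exact hτcβ
  -- equality of the two intermediate fields of L
  have hfixeq : (IntermediateField.adjoin ℚ ({αL} : Set L)).fixingSubgroup
      = (IntermediateField.adjoin ℚ ({βL} : Set L)).fixingSubgroup := by
    ext σ
    rw [hfix, hfix, claimA, claimB]
  have hKB : IntermediateField.adjoin ℚ ({αL} : Set L)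
      = IntermediateField.adjoin ℚ ({βL} : Set L) := by
    have h1 := IsGalois.fixedField_fixingSubgroup (IntermediateField.adjoin ℚ ({αL} : Set L))
    have h2 := IsGalois.fixedField_fixingSubgroup (IntermediateField.adjoin ℚ ({βL} : Set L))
    rw [← h1, ← h2, hfixeq]
  -- part 1
  have hmapα : IntermediateField.map L.val (IntermediateField.adjoin ℚ ({αL} : Set L))
      = IntermediateField.adjoin ℚ ({sqrtR * (ζ - ζ⁻¹)} : Set ℂ) := by
    rw [IntermediateField.adjoin_map]
    congr 1
    rw [Set.image_singleton]
    rfl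
  have hmapβ : IntermediateField.map L.val (IntermediateField.adjoin ℚ ({βL} : Set L))
      = IntermediateField.adjoin ℚ ({ζ + ζ⁻¹} : Set ℂ) := by
    rw [IntermediateField.adjoin_map]
    congr 1
    rw [Set.image_singleton]
    rfl
  have part1 : K = IntermediateField.adjoin ℚ ({ζ + ζ⁻¹} : Set ℂ) := by
    rw [hK, ← hmapα]
    exact (congrArg (IntermediateField.map L.val) hKB).trans hmapβ
  -- the fixing subgroup H
  set H : Subgroup (L ≃ₐ[ℚ] L) :=
    (IntermediateField.adjoin ℚ ({βL} : Set L)).fixingSubgroup with hHdef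
  have hmemH : ∀ σ, σ ∈ H ↔ σ = 1 ∨ σ = τc := fun σ => (hfix βL σ).trans (claimB σ)
  haveI hHnormal : H.Normal := by
    constructor
    intro h hh g
    have hcomm : g * h * g⁻¹ = h := by
      apply ψ.injective
      rw [map_mul, map_mul, map_inv, mul_comm (ψ g) (ψ h), mul_assoc, mul_inv_cancel, mul_one]
    rwa [hcomm]
  have hτcH : τc ∈ H := (hmemH τc).mpr (Or.inr rfl)
  -- ψ τc = -1
  have hψτc : ψ τc = -1 := by
    have h1 : ζL ^ ((ψ τc : ZMod n)).val = ζL⁻¹ := by rw [hspec, hτcζ]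
    have h2 : ζL ^ (((ψ τc : ZMod n)).val + 1) = 1 := by
      rw [pow_succ, h1, inv_mul_cancel₀ hζL0]
    have hdvd : n ∣ ((ψ τc : ZMod n)).val + 1 := (hζL.pow_eq_one_iff_dvd _).mp h2
    have hlt : ((ψ τc : ZMod n)).val < n := ZMod.val_lt _
    have hle := Nat.le_of_dvd (by omega) hdvd
    have hveq : ((ψ τc : ZMod n)).val = n - 1 := by omega
    apply Units.ext
    have hx : ((((ψ τc : ZMod n)).val : ℕ) : ZMod n) = (ψ τc : ZMod n) :=
      ZMod.natCast_rightInverse _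
    rw [← hx, hveq]
    have hcast : ((n - 1 : ℕ) : ZMod n) = -1 := by
      have hn1 : ((n : ℕ) : ZMod n) = 0 := ZMod.natCast_self n
      rw [Nat.cast_sub (by omega : 1 ≤ n), hn1, Nat.cast_one, zero_sub]
    rw [hcast]
    simp
  -- zpowers (-1) characterization
  have hzp : ∀ x : (ZMod n)ˣ, x ∈ Subgroup.zpowers (-1 : (ZMod n)ˣ) ↔ x = 1 ∨ x = -1 := by
    intro x
    constructor
    · rintro ⟨k, rfl⟩
      rcases Int.even_or_odd k with ⟨c, hc⟩ | ⟨c, hc⟩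
      · left
        show (-1 : (ZMod n)ˣ) ^ k = 1
        rw [hc, zpow_add, ← mul_zpow, neg_one_mul, neg_neg, one_zpow]
      · right
        show (-1 : (ZMod n)ˣ) ^ k = -1
        rw [hc, two_mul, zpow_add, zpow_add, zpow_one, ← mul_zpow, neg_one_mul, neg_neg,
          one_zpow, one_mul]
    · rintro (rfl | rfl)
      · exact Subgroup.one_mem _
      · exact Subgroup.mem_zpowers _
  -- transport of H along ψ
  have hHmap : Subgroup.map (ψ.toMonoidHom) H = Subgroup.zpowers (-1 : (ZMod n)ˣ) := by
    ext x
    rw [hzp]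
    constructor
    · rintro ⟨σ, hσ, rfl⟩
      rcases (hmemH σ).mp hσ with rfl | rfl
      · left
        exact map_one ψ.toMonoidHom
      · right
        exact hψτc
    · rintro (rfl | rfl)
      · exact ⟨1, (hmemH 1).mpr (Or.inl rfl), map_one _⟩
      · exact ⟨τc, hτcH, hψτc⟩
  -- Galois + automorphism group
  have hfieldeq : IntermediateField.fixedField H = IntermediateField.adjoin ℚ ({βL} : Set L) :=
    IsGalois.fixedField_fixingSubgroup _
  have hKmap : K = IntermediateField.map L.val (IntermediateField.adjoin ℚ ({βL} : Set L)) := by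
    rw [part1, hmapβ]
  have e1 : (↥(IntermediateField.adjoin ℚ ({βL} : Set L))) ≃ₐ[ℚ] ↥K :=
    (IntermediateField.equivMap _ L.val).trans (IntermediateField.equivOfEq hKmap.symm)
  haveI hGalF : IsGalois ℚ (↥(IntermediateField.fixedField H)) :=
    IsGalois.of_fixedField_normal_subgroup H (hn := hHnormal)
  haveI hGalB : IsGalois ℚ (↥(IntermediateField.adjoin ℚ ({βL} : Set L))) :=
    IsGalois.of_algEquiv (IntermediateField.equivOfEq hfieldeq)
  have part2 : IsGalois ℚ K := IsGalois.of_algEquiv e1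
  have e2 : (↥(IntermediateField.fixedField H)) ≃ₐ[ℚ] ↥K :=
    (IntermediateField.equivOfEq hfieldeq).trans e1
  have q1 := IsGalois.normalAutEquivQuotient H
  have q2 : ((L ≃ₐ[ℚ] L) ⧸ H) ≃* ((ZMod n)ˣ ⧸ Subgroup.zpowers (-1 : (ZMod n)ˣ)) :=
    QuotientGroup.congr H _ ψ hHmap
  exact ⟨part1, part2, ⟨((AlgEquiv.autCongr e2.symm).trans q1.symm).trans q2⟩⟩
end

section
/- Let d, R be integers with R not a perfect square, gcd(d,R) = 1, and D = d² − R. Suppose that for each prime p dividing n there exists a prime q ≥ 3 such that the q-adic valuation v_q(D) is odd and not divisible by p. Then f_n = f_n(Z,d,R) is irreducible in ℚ[Z]. -/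
open Polynomial

/-- The De Moivre polynomial
`f_n(Z,d,R) = Σ_{k=0}^{(n-1)/2} (-1)^k (n/(n-k)) C(n-k,k) D^k Z^{n-2k} - d D^{(n-1)/2}`,
where `D = d² - R`. -/
noncomputable def deMoivre (n : ℕ) (d R : ℚ) : ℚ[X] :=
  (∑ k ∈ Finset.range ((n - 1) / 2 + 1),
      C ((-1 : ℚ) ^ k * ((n : ℚ) / ((n : ℚ) - (k : ℚ))) * ((n - k).choose k : ℚ)
          * (d ^ 2 - R) ^ k) * X ^ (n - 2 * k))
    - C (d * (d ^ 2 - R) ^ ((n - 1) / 2))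

/-- Integer coefficient `n/(n-k) * C(n-k,k)`. -/
def dmc (n k : ℕ) : ℕ :=
  if k = 0 then 1 else (n - k).choose k + (n - k - 1).choose (k - 1)

lemma dmc_nat_eq (n k : ℕ) (h : 2 * k < n) :
    n * ((n - k).choose k) = (n - k) * dmc n k := by
  rcases Nat.eq_zero_or_pos k with rfl | hk
  · simp [dmc]
  · rw [dmc, if_neg hk.ne']
    have ha : 1 ≤ n - k := by omega
    -- k * C(a,k) = a * C(a-1, k-1) with a = n - k
    obtain ⟨j, rfl⟩ : ∃ j, k = j + 1 := ⟨k - 1, by omega⟩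
    have key : (n - (j+1)) * ((n - (j+1) - 1).choose j) = ((n - (j+1)).choose (j+1)) * (j+1) := by
      have := Nat.add_one_mul_choose_eq (n - (j+1) - 1) j
      rw [show (n - (j+1) - 1) + 1 = n - (j+1) by omega] at this
      simpa using this
    have hn : n = (n - (j+1)) + (j+1) := by omega
    calc n * ((n - (j+1)).choose (j+1))
        = (n - (j+1)) * ((n - (j+1)).choose (j+1)) + ((n - (j+1)).choose (j+1)) * (j+1) := by
          nth_rewrite 1 [hn]; ring
      _ = (n - (j+1)) * ((n - (j+1)).choose (j+1)) + (n - (j+1)) * ((n - (j+1) - 1).choose j) := by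
          rw [key]
      _ = (n - (j+1)) * ((n - (j+1)).choose (j+1) + (n - (j+1) - 1).choose j) := by ring
      _ = _ := by simp

lemma dmc_rat_eq (n k : ℕ) (h : 2 * k < n) :
    ((n : ℚ) / ((n : ℚ) - (k : ℚ))) * ((n - k).choose k : ℚ) = dmc n k := by
  have h1 : ((n : ℚ) - (k : ℚ)) = ((n - k : ℕ) : ℚ) := by
    have : k ≤ n := by omega
    push_cast [this]; ring
  have h2 : ((n - k : ℕ) : ℚ) ≠ 0 := by
    have : 0 < n - k := by omega
    exact_mod_cast this.ne'
  rw [h1, div_mul_eq_mul_div, div_eq_iff h2]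
  have := dmc_nat_eq n k h
  have : ((n * ((n - k).choose k) : ℕ) : ℚ) = (((n - k) * dmc n k : ℕ) : ℚ) := by exact_mod_cast this
  push_cast at this
  linarith

/-- Integer version of the De Moivre polynomial. -/
noncomputable def intDM (n : ℕ) (d D : ℤ) : ℤ[X] :=
  (∑ k ∈ Finset.range ((n - 1) / 2 + 1),
      C ((-1 : ℤ) ^ k * (dmc n k : ℤ) * D ^ k) * X ^ (n - 2 * k))
    - C (d * D ^ ((n - 1) / 2))

lemma intDM_coeff (n : ℕ) (d D : ℤ) (i : ℕ) :
    (intDM n d D).coeff i =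
      (∑ k ∈ Finset.range ((n - 1) / 2 + 1),
        if n - 2 * k = i then ((-1 : ℤ) ^ k * (dmc n k : ℤ) * D ^ k) else 0)
      - (if i = 0 then d * D ^ ((n - 1) / 2) else 0) := by
  rw [intDM, coeff_sub, finset_sum_coeff]
  congr 1
  · refine Finset.sum_congr rfl fun k _ => ?_
    rw [coeff_C_mul, coeff_X_pow]
    by_cases h : n - 2 * k = i
    · rw [if_pos h, if_pos h.symm, mul_one]
    · rw [if_neg h, if_neg (Ne.symm h), mul_zero]
  · rw [coeff_C]

lemma intDM_coeff_zero (n : ℕ) (hodd : Odd n) (hn : 3 ≤ n) (d D : ℤ) :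
    (intDM n d D).coeff 0 = -(d * D ^ ((n - 1) / 2)) := by
  rw [intDM_coeff, if_pos rfl, Finset.sum_eq_zero, zero_sub]
  intro k hk
  rw [Finset.mem_range] at hk
  rw [if_neg]
  obtain ⟨m, hm⟩ := hodd
  omega

lemma intDM_coeff_n (n : ℕ) (hodd : Odd n) (hn : 3 ≤ n) (d D : ℤ) :
    (intDM n d D).coeff n = 1 := by
  obtain ⟨m, hm⟩ := hodd
  rw [intDM_coeff, if_neg (by omega), sub_zero,
    Finset.sum_eq_single 0 (fun k hk hkne => by
      rw [Finset.mem_range] at hk; rw [if_neg (by omega)]) (fun h => absurd (Finset.mem_range.2 (by omega)) h)]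
  simp [dmc]

lemma intDM_coeff_of_gt (n : ℕ) (d D : ℤ) (i : ℕ) (hi : n < i) :
    (intDM n d D).coeff i = 0 := by
  rw [intDM_coeff, if_neg (by omega), sub_zero]
  exact Finset.sum_eq_zero fun k _ => by rw [if_neg (by omega)]

lemma intDM_natDegree (n : ℕ) (hodd : Odd n) (hn : 3 ≤ n) (d D : ℤ) :
    (intDM n d D).natDegree = n := by
  have h1 : (intDM n d D).natDegree ≤ n :=
    natDegree_le_iff_coeff_eq_zero.2 fun m hm => intDM_coeff_of_gt n d D m hm
  have h2 : (intDM n d D).coeff n ≠ 0 := by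
    rw [intDM_coeff_n n hodd hn]; exact one_ne_zero
  exact le_antisymm h1 (le_natDegree_of_ne_zero h2)

lemma intDM_monic (n : ℕ) (hodd : Odd n) (hn : 3 ≤ n) (d D : ℤ) :
    (intDM n d D).Monic := by
  rw [Monic, leadingCoeff, intDM_natDegree n hodd hn, intDM_coeff_n n hodd hn]

lemma intDM_map (n : ℕ) (hodd : Odd n) (hn : 3 ≤ n) (d R : ℤ) :
    (intDM n d (d ^ 2 - R)).map (Int.castRingHom ℚ) = deMoivre n (d : ℚ) (R : ℚ) := by
  rw [intDM, deMoivre, Polynomial.map_sub, Polynomial.map_sum, map_C]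
  congr 1
  · refine Finset.sum_congr rfl fun k hk => ?_
    rw [Finset.mem_range] at hk
    have h2k : 2 * k < n := by obtain ⟨m, hm⟩ := hodd; omega
    rw [Polynomial.map_mul, map_C, Polynomial.map_pow, map_X]
    congr 1
    congr 1
    rw [mul_assoc ((-1:ℚ)^k), dmc_rat_eq n k h2k]
    simp only [eq_intCast]
    push_cast
    ring
  · congr 1
    simp only [eq_intCast]
    push_cast
    ring

lemma exists_min_index (q n M : ℕ) (P : ℤ[X]) (hP : P ≠ 0) :
    ∃ a i0, i0 ∈ P.support ∧ n * padicValInt q (P.coeff i0) + M * i0 = a ∧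
      (∀ i ∈ P.support, a ≤ n * padicValInt q (P.coeff i) + M * i) ∧
      (∀ i ∈ P.support, i < i0 → a < n * padicValInt q (P.coeff i) + M * i) := by
  classical
  have hsne : P.support.Nonempty := nonempty_support_iff.2 hP
  obtain ⟨iA, hiA, hiAmin⟩ := P.support.exists_min_image
    (fun i => n * padicValInt q (P.coeff i) + M * i) hsne
  have hfne : (P.support.filter
      (fun i => n * padicValInt q (P.coeff i) + M * i
        = n * padicValInt q (P.coeff iA) + M * iA)).Nonempty :=
    ⟨iA, Finset.mem_filter.2 ⟨hiA, rfl⟩⟩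
  obtain ⟨i0, hi0, hi0min⟩ := (P.support.filter _).exists_min_image (fun i => i) hfne
  rw [Finset.mem_filter] at hi0
  refine ⟨n * padicValInt q (P.coeff iA) + M * iA, i0, hi0.1, hi0.2, hiAmin, ?_⟩
  intro i hi hlt
  rcases lt_or_eq_of_le (hiAmin i hi) with h | h
  · exact h
  · exact absurd (hi0min i (Finset.mem_filter.2 ⟨hi, h.symm⟩)) (by omega)

lemma slope_lemma (q n M : ℕ) (hq : q.Prime) (G H : ℤ[X]) (hG : G.Monic) (hH : H.Monic)
    (hn : G.natDegree + H.natDegree = n)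
    (hFc : ∀ i, (G * H).coeff i = 0 ∨
      n * M ≤ n * padicValInt q ((G * H).coeff i) + M * i)
    (hF0 : (G * H).coeff 0 ≠ 0)
    (hF0v : padicValInt q ((G * H).coeff 0) = M) :
    n * padicValInt q (G.coeff 0) = M * G.natDegree := by
  haveI : Fact q.Prime := ⟨hq⟩
  obtain ⟨aG, i0, hi0s, hwi0, hminG, hstrG⟩ := exists_min_index q n M G hG.ne_zero
  obtain ⟨aH, j0, hj0s, hwj0, hminH, hstrH⟩ := exists_min_index q n M H hH.ne_zero
  have hGi0 : G.coeff i0 ≠ 0 := mem_support_iff.1 hi0s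
  have hHj0 : H.coeff j0 ≠ 0 := mem_support_iff.1 hj0s
  have hT : padicValInt q (G.coeff i0 * H.coeff j0)
      = padicValInt q (G.coeff i0) + padicValInt q (H.coeff j0) :=
    padicValInt.mul hGi0 hHj0
  have hTne : G.coeff i0 * H.coeff j0 ≠ 0 := mul_ne_zero hGi0 hHj0
  have hbridge : n * (padicValInt q (G.coeff i0) + padicValInt q (H.coeff j0))
      + M * (i0 + j0) = aG + aH := by
    rw [← hwi0, ← hwj0]; ring
  -- other terms of the convolution are divisible by one more power of q
  have hrest : ∀ x ∈ Finset.HasAntidiagonal.antidiagonal (i0 + j0), x ≠ (i0, j0) →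
      (q : ℤ) ^ (padicValInt q (G.coeff i0) + padicValInt q (H.coeff j0) + 1)
        ∣ G.coeff x.1 * H.coeff x.2 := by
    intro x hx hne
    rw [Finset.HasAntidiagonal.mem_antidiagonal] at hx
    by_cases hg0 : G.coeff x.1 = 0
    · rw [hg0, zero_mul]; exact dvd_zero _
    by_cases hh0 : H.coeff x.2 = 0
    · rw [hh0, mul_zero]; exact dvd_zero _
    have hx1 : x.1 ∈ G.support := mem_support_iff.2 hg0
    have hx2 : x.2 ∈ H.support := mem_support_iff.2 hh0
    have hcase : x.1 < i0 ∨ x.2 < j0 := by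
      have : x.1 ≠ i0 ∨ x.2 ≠ j0 := by
        by_contra hcon
        push_neg at hcon
        exact hne (Prod.ext hcon.1 hcon.2)
      omega
    have hxr : M * x.1 + M * x.2 = M * (i0 + j0) := by rw [← hx]; ring
    have hexp : n * (padicValInt q (G.coeff x.1) + padicValInt q (H.coeff x.2))
        = n * padicValInt q (G.coeff x.1) + n * padicValInt q (H.coeff x.2) := by ring
    have hgt2 : n * (padicValInt q (G.coeff i0) + padicValInt q (H.coeff j0))
        < n * (padicValInt q (G.coeff x.1) + padicValInt q (H.coeff x.2)) := by
      rcases hcase with h | h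
      · have h1 := hstrG x.1 hx1 h
        have h2 := hminH x.2 hx2
        omega
      · have h1 := hminG x.1 hx1
        have h2 := hstrH x.2 hx2 h
        omega
    have hvs : padicValInt q (G.coeff i0) + padicValInt q (H.coeff j0)
        < padicValInt q (G.coeff x.1) + padicValInt q (H.coeff x.2) :=
      lt_of_mul_lt_mul_left hgt2 (Nat.zero_le n)
    calc (q : ℤ) ^ (padicValInt q (G.coeff i0) + padicValInt q (H.coeff j0) + 1)
        ∣ (q : ℤ) ^ (padicValInt q (G.coeff x.1) + padicValInt q (H.coeff x.2)) :=
          pow_dvd_pow _ hvs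
      _ = (q : ℤ) ^ (padicValInt q (G.coeff x.1)) * (q : ℤ) ^ (padicValInt q (H.coeff x.2)) :=
          pow_add _ _ _
      _ ∣ G.coeff x.1 * H.coeff x.2 :=
          mul_dvd_mul (padicValInt_dvd _) (padicValInt_dvd _)
  have hmem : (i0, j0) ∈ Finset.HasAntidiagonal.antidiagonal (i0 + j0) := Finset.HasAntidiagonal.mem_antidiagonal.2 rfl
  have hsplit : (G * H).coeff (i0 + j0) = G.coeff i0 * H.coeff j0 +
      ∑ x ∈ (Finset.HasAntidiagonal.antidiagonal (i0 + j0)).erase (i0, j0), G.coeff x.1 * H.coeff x.2 := by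
    rw [coeff_mul, ← Finset.add_sum_erase _ _ hmem]
  have hsum_dvd : (q : ℤ) ^ (padicValInt q (G.coeff i0) + padicValInt q (H.coeff j0) + 1) ∣
      ∑ x ∈ (Finset.HasAntidiagonal.antidiagonal (i0 + j0)).erase (i0, j0), G.coeff x.1 * H.coeff x.2 :=
    Finset.dvd_sum fun x hx =>
      hrest x (Finset.mem_of_mem_erase hx) (Finset.ne_of_mem_erase hx)
  have hTnd : ¬ (q : ℤ) ^ (padicValInt q (G.coeff i0) + padicValInt q (H.coeff j0) + 1)
      ∣ G.coeff i0 * H.coeff j0 := by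
    rw [padicValInt_dvd_iff]
    push_neg
    exact ⟨hTne, by omega⟩
  have hrne : (G * H).coeff (i0 + j0) ≠ 0 := by
    intro h0
    apply hTnd
    have he : G.coeff i0 * H.coeff j0 =
        -(∑ x ∈ (Finset.HasAntidiagonal.antidiagonal (i0 + j0)).erase (i0, j0), G.coeff x.1 * H.coeff x.2) := by
      rw [hsplit] at h0; linarith
    rw [he]
    exact dvd_neg.mpr hsum_dvd
  have hvr : padicValInt q ((G * H).coeff (i0 + j0))
      = padicValInt q (G.coeff i0) + padicValInt q (H.coeff j0) := by
    have hd1 : (q : ℤ) ^ (padicValInt q (G.coeff i0) + padicValInt q (H.coeff j0))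
        ∣ (G * H).coeff (i0 + j0) := by
      rw [hsplit]
      refine dvd_add ?_ (dvd_trans (pow_dvd_pow _ (Nat.le_succ _)) hsum_dvd)
      rw [← hT]
      exact padicValInt_dvd _
    have hd2 : ¬ (q : ℤ) ^ (padicValInt q (G.coeff i0) + padicValInt q (H.coeff j0) + 1)
        ∣ (G * H).coeff (i0 + j0) := by
      intro hdd
      apply hTnd
      have he : G.coeff i0 * H.coeff j0 = (G * H).coeff (i0 + j0) -
          ∑ x ∈ (Finset.HasAntidiagonal.antidiagonal (i0 + j0)).erase (i0, j0), G.coeff x.1 * H.coeff x.2 := by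
        rw [hsplit]; ring
      rw [he]
      exact dvd_sub hdd hsum_dvd
    have h1 : padicValInt q (G.coeff i0) + padicValInt q (H.coeff j0)
        ≤ padicValInt q ((G * H).coeff (i0 + j0)) :=
      ((padicValInt_dvd_iff _ _).1 hd1).resolve_left hrne
    have h2 : padicValInt q ((G * H).coeff (i0 + j0))
        ≤ padicValInt q (G.coeff i0) + padicValInt q (H.coeff j0) := by
      by_contra hcon
      exact hd2 ((padicValInt_dvd_iff _ _).2 (Or.inr (by omega)))
    omega
  -- main chain
  have hkey : n * M ≤ aG + aH := by
    rcases hFc (i0 + j0) with h | h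
    · exact absurd h hrne
    · rw [hvr] at h
      have hexp : n * (padicValInt q (G.coeff i0) + padicValInt q (H.coeff j0))
          = n * padicValInt q (G.coeff i0) + n * padicValInt q (H.coeff j0) := by ring
      omega
  have haGk : aG ≤ M * G.natDegree := by
    have hks : G.natDegree ∈ G.support := natDegree_mem_support_of_nonzero hG.ne_zero
    have := hminG G.natDegree hks
    rwa [hG.coeff_natDegree, padicValInt.one, Nat.mul_zero, Nat.zero_add] at this
  have haHl : aH ≤ M * H.natDegree := by
    have hls : H.natDegree ∈ H.support := natDegree_mem_support_of_nonzero hH.ne_zero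
    have := hminH H.natDegree hls
    rwa [hH.coeff_natDegree, padicValInt.one, Nat.mul_zero, Nat.zero_add] at this
  have hG0 : G.coeff 0 ≠ 0 := by
    intro h0; apply hF0; rw [mul_coeff_zero, h0, zero_mul]
  have hH0 : H.coeff 0 ≠ 0 := by
    intro h0; apply hF0; rw [mul_coeff_zero, h0, mul_zero]
  have haG0 : aG ≤ n * padicValInt q (G.coeff 0) := by
    have := hminG 0 (mem_support_iff.2 hG0)
    omega
  have haH0 : aH ≤ n * padicValInt q (H.coeff 0) := by
    have := hminH 0 (mem_support_iff.2 hH0)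
    omega
  have h0v : padicValInt q (G.coeff 0) + padicValInt q (H.coeff 0) = M := by
    rw [← hF0v, mul_coeff_zero, padicValInt.mul hG0 hH0]
  have e1 : n * M = M * G.natDegree + M * H.natDegree := by rw [← hn]; ring
  have e2 : n * padicValInt q (G.coeff 0) + n * padicValInt q (H.coeff 0) = n * M := by
    rw [← h0v]; ring
  omega

lemma padicValInt_neg (q : ℕ) (x : ℤ) : padicValInt q (-x) = padicValInt q x := by
  unfold padicValInt
  rw [Int.natAbs_neg]

lemma padicValInt_pow (q : ℕ) (hq : q.Prime) (x : ℤ) (hx : x ≠ 0) (m : ℕ) :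
    padicValInt q (x ^ m) = m * padicValInt q x := by
  haveI : Fact q.Prime := ⟨hq⟩
  unfold padicValInt
  rw [Int.natAbs_pow]
  exact padicValNat.pow _ m

lemma intDM_coeff_zero_val (n m : ℕ) (hn : n = 2 * m + 1) (hm : 1 ≤ m)
    (d D : ℤ) (hd0 : d ≠ 0) (hD0 : D ≠ 0) (q : ℕ) (hq : q.Prime) (hqd : ¬ (q : ℤ) ∣ d) :
    padicValInt q ((intDM n d D).coeff 0) = m * padicValInt q D := by
  haveI : Fact q.Prime := ⟨hq⟩
  have hodd : Odd n := ⟨m, by omega⟩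
  have hn3 : 3 ≤ n := by omega
  have hmeq : (n - 1) / 2 = m := by omega
  rw [intDM_coeff_zero n hodd hn3 d D, hmeq, padicValInt_neg,
    padicValInt.mul hd0 (pow_ne_zero _ hD0),
    padicValInt.eq_zero_of_not_dvd hqd, padicValInt_pow q hq D hD0 m, Nat.zero_add]

lemma intDM_hFc (n m : ℕ) (hn : n = 2 * m + 1) (hm : 1 ≤ m)
    (d D : ℤ) (hd0 : d ≠ 0) (hD0 : D ≠ 0) (q : ℕ) (hq : q.Prime) (hqd : ¬ (q : ℤ) ∣ d) :
    ∀ i, (intDM n d D).coeff i = 0 ∨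
      n * (m * padicValInt q D) ≤
        n * padicValInt q ((intDM n d D).coeff i) + (m * padicValInt q D) * i := by
  haveI : Fact q.Prime := ⟨hq⟩
  have hodd : Odd n := ⟨m, by omega⟩
  have hn3 : 3 ≤ n := by omega
  have hmeq : (n - 1) / 2 = m := by omega
  intro i
  by_cases hi0 : i = 0
  · subst hi0
    right
    rw [intDM_coeff_zero_val n m hn hm d D hd0 hD0 q hq hqd]
    omega
  -- i ≠ 0
  by_cases hex : ∃ k, k ≤ m ∧ n - 2 * k = i
  · obtain ⟨k, hkm, hki⟩ := hex
    have hcoeff : (intDM n d D).coeff i = (-1 : ℤ) ^ k * (dmc n k : ℤ) * D ^ k := by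
      rw [intDM_coeff, if_neg hi0, sub_zero, hmeq,
        Finset.sum_eq_single k (fun b hb hbne => by
          rw [Finset.mem_range] at hb
          rw [if_neg (by omega)])
          (fun h => absurd (Finset.mem_range.2 (by omega)) h),
        if_pos hki]
    by_cases hc0 : (intDM n d D).coeff i = 0
    · exact Or.inl hc0
    right
    -- q^(k*v) divides the coefficient
    have hdvd : (q : ℤ) ^ (k * padicValInt q D) ∣ (intDM n d D).coeff i := by
      rw [hcoeff]
      refine Dvd.dvd.mul_left ?_ _
      calc (q : ℤ) ^ (k * padicValInt q D)
          = ((q : ℤ) ^ padicValInt q D) ^ k := by rw [← pow_mul, mul_comm]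
        _ ∣ D ^ k := pow_dvd_pow_of_dvd (padicValInt_dvd D) k
    have hvc : k * padicValInt q D ≤ padicValInt q ((intDM n d D).coeff i) :=
      ((padicValInt_dvd_iff _ _).1 hdvd).resolve_left hc0
    -- arithmetic
    obtain ⟨j, hj⟩ : ∃ j, m = k + j := ⟨m - k, by omega⟩
    have hieq : i = 2 * j + 1 := by omega
    set v := padicValInt q D with hv
    have hvc2 : n * (k * v) ≤ n * padicValInt q ((intDM n d D).coeff i) :=
      Nat.mul_le_mul_left n hvc
    have base : n * (m * v) ≤ n * (k * v) + (m * v) * i := by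
      subst hj hieq hn
      nlinarith [Nat.zero_le v, Nat.zero_le j, Nat.zero_le k]
    omega
  · -- no matching exponent: coefficient is zero
    left
    rw [intDM_coeff, if_neg hi0, sub_zero, hmeq]
    refine Finset.sum_eq_zero fun k hk => ?_
    rw [Finset.mem_range] at hk
    rw [if_neg fun h => hex ⟨k, by omega, h⟩]

lemma intDM_factor_deg (n m : ℕ) (hn : n = 2 * m + 1) (hm : 1 ≤ m)
    (d D : ℤ) (hd0 : d ≠ 0) (hD0 : D ≠ 0)
    (hval : ∀ p : ℕ, p.Prime → p ∣ n →
      ∃ q : ℕ, q.Prime ∧ ¬ (q : ℤ) ∣ d ∧ 1 ≤ padicValInt q D ∧ ¬ p ∣ padicValInt q D)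
    (G H : ℤ[X]) (hGm : G.Monic) (hHm : H.Monic) (hGH : G * H = intDM n d D) :
    G.natDegree = 0 ∨ H.natDegree = 0 := by
  have hodd : Odd n := ⟨m, by omega⟩
  have hn3 : 3 ≤ n := by omega
  have hmeq : (n - 1) / 2 = m := by omega
  have hsum : G.natDegree + H.natDegree = n := by
    rw [← intDM_natDegree n hodd hn3 d D, ← hGH, hGm.natDegree_mul hHm]
  by_cases hk0 : G.natDegree = 0
  · exact Or.inl hk0
  -- show n ∣ G.natDegree
  have hndvd : n ∣ G.natDegree := by
    have hn0 : n ≠ 0 := by omega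
    rw [← Nat.factorization_le_iff_dvd hn0 hk0, Finsupp.le_def]
    intro p
    by_cases hp : p.Prime
    · by_cases hpn : p ∣ n
      · obtain ⟨q, hq, hqd, hv1, hpv⟩ := hval p hp hpn
        have hslope := slope_lemma q n (m * padicValInt q D) hq G H hGm hHm hsum
          (by rw [hGH]; exact intDM_hFc n m hn hm d D hd0 hD0 q hq hqd)
          (by rw [hGH, intDM_coeff_zero n hodd hn3 d D, hmeq]
              exact neg_ne_zero.2 (mul_ne_zero hd0 (pow_ne_zero _ hD0)))
          (by rw [hGH]; exact intDM_coeff_zero_val n m hn hm d D hd0 hD0 q hq hqd)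
        -- n ∣ (m * v) * G.natDegree
        have hdv : n ∣ (m * padicValInt q D) * G.natDegree := ⟨_, hslope.symm⟩
        have hpa : p ^ n.factorization p ∣ (m * padicValInt q D) * G.natDegree :=
          dvd_trans (Nat.ordProj_dvd n p) hdv
        have hpm : ¬ p ∣ m := by
          intro hpm
          have h1 : p ∣ n - 2 * m := Nat.dvd_sub hpn (Dvd.dvd.mul_left hpm 2)
          rw [show n - 2 * m = 1 by omega] at h1
          exact hp.one_lt.ne' (Nat.dvd_one.1 h1)
        have hcop : Nat.Coprime (p ^ n.factorization p) (m * padicValInt q D) :=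
          Nat.Coprime.pow_left _ ((Nat.Prime.coprime_iff_not_dvd hp).2
            (fun hdvd => (hp.dvd_mul.1 hdvd).elim hpm hpv))
        have := Nat.Coprime.dvd_of_dvd_mul_left hcop hpa
        exact (Nat.Prime.pow_dvd_iff_le_factorization hp hk0).1 this
      · rw [Nat.factorization_eq_zero_of_not_dvd hpn]
        exact Nat.zero_le _
    · rw [Nat.factorization_eq_zero_of_not_prime _ hp]
      exact Nat.zero_le _
  have hkn : G.natDegree = n := by
    have h1 : n ≤ G.natDegree := Nat.le_of_dvd (Nat.pos_of_ne_zero hk0) hndvd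
    omega
  right
  omega

lemma isUnit_of_deg_zero (c : ℤ[X]) (h0 : c.natDegree = 0)
    (hlc : c.leadingCoeff = 1 ∨ c.leadingCoeff = -1) : IsUnit c := by
  have hc : c = C (c.coeff 0) := eq_C_of_natDegree_eq_zero h0
  rw [hc]
  rw [isUnit_C]
  have : c.leadingCoeff = c.coeff 0 := by rw [leadingCoeff, h0]
  rw [← this]
  exact Int.isUnit_iff.2 hlc


/-- **Proposition 7.**  Let `n ≥ 3` be odd and `d, R` integers with `R` not a perfect square,
`gcd(d, R) = 1` and `D = d² - R`.  If for each prime `p` dividing `n` there is a prime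
`q ≥ 3` such that the `q`-adic valuation `v_q(D)` is odd and not divisible by `p`, then
`f_n = f_n(Z,d,R)` is irreducible in `ℚ[Z]`. -/
theorem deMoivre_irreducible_of_valuation
    (n : ℕ) (hn3 : 3 ≤ n) (hodd : Odd n)
    (d R : ℤ) (hd : d ≠ 0) (hR : ¬ IsSquare R)
    (hgcd : Int.gcd d R = 1)
    (D : ℤ) (hD : D = d ^ 2 - R)
    (hval : ∀ p : ℕ, p.Prime → p ∣ n →
      ∃ q : ℕ, q.Prime ∧ 3 ≤ q ∧ Odd (padicValInt q D) ∧ ¬ p ∣ padicValInt q D) :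
    Irreducible (deMoivre n (d : ℚ) (R : ℚ)) := by
  obtain ⟨m, hmn⟩ := hodd
  have hn : n = 2 * m + 1 := by omega
  have hm : 1 ≤ m := by omega
  have hodd' : Odd n := ⟨m, hmn⟩
  have hD0 : D ≠ 0 := by
    intro h0
    apply hR
    exact ⟨d, by linarith [hD, h0]⟩
  have hval' : ∀ p : ℕ, p.Prime → p ∣ n →
      ∃ q : ℕ, q.Prime ∧ ¬ (q : ℤ) ∣ d ∧ 1 ≤ padicValInt q D ∧ ¬ p ∣ padicValInt q D := by
    intro p hp hpn
    obtain ⟨q, hq, _, hvodd, hpv⟩ := hval p hp hpn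
    haveI : Fact q.Prime := ⟨hq⟩
    have hv1 : 1 ≤ padicValInt q D := by
      rcases hvodd with ⟨t, ht⟩; omega
    refine ⟨q, hq, ?_, hv1, hpv⟩
    intro hqd
    have hqD : (q : ℤ) ∣ D := by
      have := (padicValInt_dvd_iff 1 D).2 (Or.inr hv1)
      rwa [pow_one] at this
    have hqR : (q : ℤ) ∣ R := by
      have : R = d * d - D := by rw [hD]; ring
      rw [this]
      exact dvd_sub (Dvd.dvd.mul_left hqd d) hqD
    have hq1 : (q : ℤ) ∣ (Int.gcd d R : ℤ) := Int.dvd_coe_gcd hqd hqR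
    rw [hgcd] at hq1
    have : q ∣ 1 := by exact_mod_cast hq1
    exact hq.one_lt.ne' (Nat.dvd_one.1 this)
  -- irreducibility over ℤ
  have hmonic := intDM_monic n hodd' hn3 d D
  have hirr : Irreducible (intDM n d D) := by
    constructor
    · intro hu
      have := natDegree_eq_zero_of_isUnit hu
      rw [intDM_natDegree n hodd' hn3 d D] at this
      omega
    · intro a b hab
      have hlc : a.leadingCoeff * b.leadingCoeff = 1 := by
        rw [← leadingCoeff_mul, ← hab]
        exact hmonic
      rcases Int.mul_eq_one_iff_eq_one_or_neg_one.1 hlc with ⟨ha1, hb1⟩ | ⟨ha1, hb1⟩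
      · have hGm : a.Monic := ha1
        have hHm : b.Monic := hb1
        rcases intDM_factor_deg n m hn hm d D hd hD0 hval' a b hGm hHm hab.symm with h | h
        · exact Or.inl (isUnit_of_deg_zero a h (Or.inl ha1))
        · exact Or.inr (isUnit_of_deg_zero b h (Or.inl hb1))
      · have hGm : (-a).Monic := by rw [Monic, leadingCoeff_neg, ha1, neg_neg]
        have hHm : (-b).Monic := by rw [Monic, leadingCoeff_neg, hb1, neg_neg]
        have hab' : (-a) * (-b) = intDM n d D := by rw [neg_mul_neg, ← hab]
        rcases intDM_factor_deg n m hn hm d D hd hD0 hval' (-a) (-b) hGm hHm hab' with h | h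
        · rw [natDegree_neg] at h
          exact Or.inl (isUnit_of_deg_zero a h (Or.inr ha1))
        · rw [natDegree_neg] at h
          exact Or.inr (isUnit_of_deg_zero b h (Or.inr hb1))
  have hprim : (intDM n d D).IsPrimitive := hmonic.isPrimitive
  have h2 := (Polynomial.IsPrimitive.Int.irreducible_iff_irreducible_map_cast hprim).mp hirr
  subst hD
  rwa [intDM_map n hodd' hn3 d R] at h2
end
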